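/- Let Ω ⊆ ℝⁿ be an open bounded set and let u : Ω → ℝ be a bounded continuous function that is locally semiconcave in Ω. Let K ⊂ Ω be a compact set such that u is continuously differentiable on an open neighborhood of K contained in Ω. Then, for ε > 0 small enough, the sup-convolution u^ε is differentiable at every point of K, and ∇u^ε converges to ∇u uniformly on K as ε → 0⁺. -/

import Mathlib

open Set Metric
open scoped RealInnerProductSpace

/-- The sup-convolution `u^ε` of a function `u : Ω → ℝ`. -/
noncomputable def supConv {n : ℕ} (ε : ℝ) (Ω : Set (EuclideanSpace ℝ (Fin n)))
    (u : EuclideanSpace ℝ (Fin n) → ℝ) (x : EuclideanSpace ℝ (Fin n)) : ℝ :=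
  sSup ((fun y => u y - ‖x - y‖ ^ 2 / (2 * ε)) '' Ω)

/-- A function `u` is locally semiconcave on an open set `A` if for every compact `K ⊆ A`
there is a constant `C ≥ 0` such that the semiconcavity inequality holds on every
segment contained in `K`. -/
def LocallySemiconcaveOn {n : ℕ} (A : Set (EuclideanSpace ℝ (Fin n)))
    (u : EuclideanSpace ℝ (Fin n) → ℝ) : Prop :=
  ∀ K : Set (EuclideanSpace ℝ (Fin n)), K ⊆ A → IsCompact K →
    ∃ C : ℝ, 0 ≤ C ∧ ∀ x y : EuclideanSpace ℝ (Fin n), segment ℝ x y ⊆ K →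
      ∀ l : ℝ, l ∈ Set.Icc (0:ℝ) 1 →
        l * u x + (1 - l) * u y - C * (l * (1 - l)) / 2 * ‖x - y‖ ^ 2
          ≤ u (l • x + (1 - l) • y)

lemma norm_sq_sub_norm_sq {F : Type*} [NormedAddCommGroup F] [InnerProductSpace ℝ F]
    (a b : F) : ‖a‖^2 - ‖b‖^2 = ⟪a - b, a + b⟫ := by
  rw [← real_inner_self_eq_norm_sq, ← real_inner_self_eq_norm_sq]
  simp only [inner_sub_left, inner_add_right]
  rw [real_inner_comm b a]; ring

/-- A locally semiconcave differentiable function admits a supporting paraboloid. -/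
lemma support_paraboloid {F : Type*} [NormedAddCommGroup F] [InnerProductSpace ℝ F]
    [CompleteSpace F] {u : F → ℝ} {C : ℝ} (hC : 0 ≤ C) {y1 y2 : F}
    (hseg : ∀ l ∈ Icc (0:ℝ) 1,
      l * u y1 + (1-l) * u y2 - C * (l*(1-l))/2 * ‖y1-y2‖^2 ≤ u (l • y1 + (1-l) • y2))
    (hd : DifferentiableAt ℝ u y1) :
    u y2 ≤ u y1 + ⟪gradient u y1, y2 - y1⟫ + C/2 * ‖y1 - y2‖^2 := by
  set v := y2 - y1 with hv
  have hline : HasDerivAt (fun t : ℝ => y1 + t • v) v 0 := by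
    simpa using ((hasDerivAt_id (0:ℝ)).smul_const v).const_add y1
  have hg : HasDerivAt (fun t : ℝ => u (y1 + t • v)) (fderiv ℝ u y1 v) 0 := by
    have hdF : HasFDerivAt u (fderiv ℝ u y1) (y1 + (0:ℝ) • v) := by
      simpa using hd.hasFDerivAt
    exact hdF.comp_hasDerivAt 0 hline
  have hslope : ∀ t ∈ Ioc (0:ℝ) 1,
      u y2 - u y1 - C/2 * ‖y1 - y2‖^2 ≤ (u (y1 + t • v) - u y1) / t := by
    intro t ht
    have h1 : (1 - t) ∈ Icc (0:ℝ) 1 := ⟨by linarith [ht.2], by linarith [ht.1]⟩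
    have := hseg (1 - t) h1
    have hpt : (1 - t) • y1 + (1 - (1 - t)) • y2 = y1 + t • v := by
      simp only [hv]; module
    rw [hpt] at this
    rw [le_div_iff₀ ht.1]
    nlinarith [ht.1, ht.2, sq_nonneg (‖y1 - y2‖),
      mul_nonneg (mul_nonneg hC ht.1.le) (sq_nonneg ‖y1-y2‖)]
  have htend : Filter.Tendsto (fun t : ℝ => (u (y1 + t • v) - u y1) / t)
      (nhdsWithin 0 (Ioi 0)) (nhds (fderiv ℝ u y1 v)) := by
    have h := hasDerivAt_iff_tendsto_slope.1 hg
    have h2 := h.mono_left (nhdsWithin_mono 0 (fun x (hx : x ∈ Ioi (0:ℝ)) => ne_of_gt hx))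
    refine h2.congr' ?_
    filter_upwards [self_mem_nhdsWithin] with t ht
    simp [slope_def_field]
  have hlim : u y2 - u y1 - C/2 * ‖y1 - y2‖^2 ≤ fderiv ℝ u y1 v := by
    refine ge_of_tendsto htend ?_
    filter_upwards [Ioc_mem_nhdsGT_of_mem ⟨le_refl (0:ℝ), zero_lt_one⟩] with t ht
    exact hslope t ht
  have hginner : ⟪gradient u y1, v⟫ = fderiv ℝ u y1 v := by
    rw [gradient, InnerProductSpace.toDual_symm_apply]
  linarith [hlim, hginner.ge, hginner.le]

/-- The supremum defining the sup-convolution is attained near the base point. -/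
lemma supConv_exists_max {n : ℕ} {Ω : Set (EuclideanSpace ℝ (Fin n))}
    {u : EuclideanSpace ℝ (Fin n) → ℝ} {M ε R : ℝ}
    (hu : ContinuousOn u Ω) (hM : ∀ y ∈ Ω, |u y| ≤ M)
    (hε : 0 < ε) (hR : 0 < R) (hRM : 4 * M * ε ≤ R^2)
    {z : EuclideanSpace ℝ (Fin n)} (hz : z ∈ Ω) (hB : closedBall z R ⊆ Ω) :
    ∃ y ∈ closedBall z R, (∀ w ∈ Ω, u w - ‖z - w‖^2/(2*ε) ≤ u y - ‖z - y‖^2/(2*ε)) ∧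
      supConv ε Ω u z = u y - ‖z - y‖^2/(2*ε) ∧ ‖y - z‖^2 ≤ 4*M*ε := by
  have h2ε : 0 < 2*ε := by linarith
  have hBc : IsCompact (closedBall z R) := isCompact_closedBall z R
  have hBne : (closedBall z R).Nonempty := ⟨z, mem_closedBall_self hR.le⟩
  have hFc : ContinuousOn (fun w => u w - ‖z - w‖^2/(2*ε)) (closedBall z R) := by
    refine (hu.mono hB).sub (Continuous.continuousOn ?_)
    continuity
  obtain ⟨y, hyB, hymax⟩ := hBc.exists_isMaxOn hBne hFc
  have hymax' : ∀ w ∈ closedBall z R, u w - ‖z - w‖^2/(2*ε) ≤ u y - ‖z - y‖^2/(2*ε) :=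
    fun w hw => hymax hw
  have hzy : u z ≤ u y - ‖z - y‖^2/(2*ε) := by
    have := hymax' z (mem_closedBall_self hR.le)
    simpa using this
  have hglob : ∀ w ∈ Ω, u w - ‖z - w‖^2/(2*ε) ≤ u y - ‖z - y‖^2/(2*ε) := by
    intro w hw
    by_cases hwB : w ∈ closedBall z R
    · exact hymax' w hwB
    · have hd : R < dist w z := by
        by_contra h
        exact hwB (mem_closedBall.2 (le_of_not_gt h))
      have hnorm : R^2 ≤ ‖z - w‖^2 := by
        have h1 : R ≤ ‖z - w‖ := by
          rw [← dist_eq_norm, dist_comm]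
          exact hd.le
        nlinarith [hR.le]
      have e2 : 2*M ≤ ‖z - w‖^2/(2*ε) := by
        rw [le_div_iff₀ h2ε]; nlinarith
      have e3 := (abs_le.1 (hM w hw)).2
      have e4 := (abs_le.1 (hM z hz)).1
      linarith
  refine ⟨y, hyB, hglob, ?_, ?_⟩
  · have hgr : IsGreatest ((fun w => u w - ‖z - w‖ ^ 2 / (2 * ε)) '' Ω)
        (u y - ‖z - y‖^2/(2*ε)) := by
      constructor
      · exact ⟨y, hB hyB, rfl⟩
      · rintro _ ⟨w, hw, rfl⟩; exact hglob w hw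
    rw [supConv]
    exact hgr.csSup_eq
  · have e3 := (abs_le.1 (hM y (hB hyB))).2
    have e4 := (abs_le.1 (hM z hz)).1
    have h1 : ‖z - y‖^2/(2*ε) ≤ 2*M := by linarith
    rw [div_le_iff₀ h2ε] at h1
    calc ‖y - z‖^2 = ‖z - y‖^2 := by rw [norm_sub_rev]
    _ ≤ 4*M*ε := by linarith

/-- First-order condition at an interior maximizer of the sup-convolution. -/
lemma supConv_foc {n : ℕ} {Ω V : Set (EuclideanSpace ℝ (Fin n))}
    {u : EuclideanSpace ℝ (Fin n) → ℝ} {ε : ℝ} (hε : 0 < ε)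
    (hΩopen : IsOpen Ω) (hVopen : IsOpen V) (huC1 : ContDiffOn ℝ 1 u V)
    {z y : EuclideanSpace ℝ (Fin n)} (hyV : y ∈ V) (hyΩ : y ∈ Ω)
    (hmax : ∀ w ∈ Ω, u w - ‖z - w‖^2/(2*ε) ≤ u y - ‖z - y‖^2/(2*ε)) :
    HasGradientAt u (ε⁻¹ • (y - z)) y := by
  have hud : DifferentiableAt ℝ u y :=
    (huC1.differentiableOn one_ne_zero).differentiableAt (hVopen.mem_nhds hyV)
  have hfun : (fun w : EuclideanSpace ℝ (Fin n) => u w - ‖z - w‖^2/(2*ε))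
      = (fun w => u w - (2*ε)⁻¹ * ‖z - w‖^2) := by
    funext w; rw [div_eq_inv_mul]
  have hq : HasFDerivAt (fun w : EuclideanSpace ℝ (Fin n) => ‖z - w‖^2)
      (2 • (innerSL ℝ (z - y)).comp (-(ContinuousLinearMap.id ℝ _))) y := by
    have := ((hasFDerivAt_id y).const_sub z).norm_sq
    simpa using this
  have hF : HasFDerivAt (fun w => u w - ‖z - w‖^2/(2*ε))
      (fderiv ℝ u y - (2*ε)⁻¹ • (2 • (innerSL ℝ (z - y)).comp
        (-(ContinuousLinearMap.id ℝ _)))) y := by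
    rw [hfun]
    exact hud.hasFDerivAt.sub (hq.const_mul ((2*ε)⁻¹))
  have hloc : IsLocalMax (fun w => u w - ‖z - w‖^2/(2*ε)) y :=
    ((hΩopen.eventually_mem hyΩ).mono (fun w hw => hmax w hw))
  have h0 := hloc.hasFDerivAt_eq_zero hF
  have hkey : (InnerProductSpace.toDual ℝ (EuclideanSpace ℝ (Fin n))) (ε⁻¹ • (y - z))
      = fderiv ℝ u y := by
    apply ContinuousLinearMap.ext
    intro v
    have h0v := ContinuousLinearMap.ext_iff.1 h0 v
    simp only [ContinuousLinearMap.sub_apply, ContinuousLinearMap.smul_apply,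
      ContinuousLinearMap.coe_smul', Pi.smul_apply, ContinuousLinearMap.comp_apply,
      ContinuousLinearMap.neg_apply, ContinuousLinearMap.id_apply, innerSL_apply_apply,
      innerSL_apply_apply, ContinuousLinearMap.zero_apply, smul_eq_mul] at h0v
    rw [InnerProductSpace.toDual_apply_apply]
    rw [real_inner_smul_left]
    have hin : ⟪z - y, -v⟫ = -⟪z - y, v⟫ := by rw [inner_neg_right]
    have hin2 : ⟪y - z, v⟫ = -⟪z - y, v⟫ := by
      rw [← inner_neg_left]; congr 1; abel
    rw [hin] at h0v
    rw [hin2]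
    have hε' : ε ≠ 0 := ne_of_gt hε
    field_simp at h0v ⊢
    linarith [two_nsmul (-⟪z - y, v⟫)]
  rw [hasGradientAt_iff_hasFDerivAt, hkey]
  exact hud.hasFDerivAt
set_option maxHeartbeats 1600000 in
theorem supConv_gradient_uniform_convergence
    {n : ℕ} (Ω : Set (EuclideanSpace ℝ (Fin n)))
    (hΩopen : IsOpen Ω) (hΩbdd : Bornology.IsBounded Ω)
    (u : EuclideanSpace ℝ (Fin n) → ℝ)
    (hu : ContinuousOn u Ω) (hubdd : ∃ M : ℝ, ∀ y ∈ Ω, |u y| ≤ M)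
    (hsc : LocallySemiconcaveOn Ω u)
    (K : Set (EuclideanSpace ℝ (Fin n))) (hK : IsCompact K)
    (V : Set (EuclideanSpace ℝ (Fin n))) (hVopen : IsOpen V)
    (hKV : K ⊆ V) (hVΩ : V ⊆ Ω) (huC1 : ContDiffOn ℝ 1 u V) :
    (∃ ε₀ > (0:ℝ), ∀ ε : ℝ, 0 < ε → ε < ε₀ → ∀ x ∈ K,
        DifferentiableAt ℝ (supConv ε Ω u) x) ∧
    (∀ δ > (0:ℝ), ∃ ε₁ > (0:ℝ), ∀ ε : ℝ, 0 < ε → ε < ε₁ → ∀ x ∈ K,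
        ‖gradient (supConv ε Ω u) x - gradient u x‖ < δ) := by
  classical
  obtain ⟨M₀, hM₀⟩ := hubdd
  set M := max M₀ 0 with hMdef
  have hM : ∀ y ∈ Ω, |u y| ≤ M := fun y hy => (hM₀ y hy).trans (le_max_left _ _)
  have hM0 : (0:ℝ) ≤ M := le_max_right _ _
  obtain ⟨r, hr, hrV⟩ := hK.exists_cthickening_subset_open hVopen hKV
  have hKrc : IsCompact (cthickening r K) := hK.cthickening
  have hKrΩ : cthickening r K ⊆ Ω := hrV.trans hVΩ
  obtain ⟨C, hC0, hCsc⟩ := hsc (cthickening r K) hKrΩ hKrc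
  set ε₀ := min ((r/4)^2/(4*M+1)) (1/(2*(C+1))) with hε₀def
  have hε₀pos : 0 < ε₀ := lt_min (by positivity) (by positivity)
  have hεM : ∀ ε : ℝ, 0 < ε → ε < ε₀ → 4*M*ε ≤ (r/4)^2 := by
    intro ε hε hε'
    have h1 : ε < (r/4)^2/(4*M+1) := lt_of_lt_of_le hε' (min_le_left _ _)
    rw [lt_div_iff₀ (by positivity)] at h1
    nlinarith
  have hεC : ∀ ε : ℝ, 0 < ε → ε < ε₀ → ε * C ≤ 1/2 := by
    intro ε hε hε'
    have h1 : ε < 1/(2*(C+1)) := lt_of_lt_of_le hε' (min_le_right _ _)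
    rw [lt_div_iff₀ (by positivity)] at h1
    nlinarith
  have hball : ∀ x ∈ K, closedBall x (r/2) ⊆ cthickening r K := by
    intro x hx
    exact (closedBall_subset_cthickening hx (r/2)).trans (cthickening_mono (by linarith) K)
  have key : ∀ ε : ℝ, 0 < ε → ε < ε₀ → ∀ x ∈ K, ∃ y, ‖y - x‖^2 ≤ 4*M*ε ∧
      y ∈ cthickening r K ∧ HasGradientAt (supConv ε Ω u) (gradient u y) x := by
    intro ε hε hε' x hx
    have h2ε : (0:ℝ) < 2*ε := by linarith
    have hεC' : ε * C ≤ 1/2 := hεC ε hε hε'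
    have hxK2 : closedBall x (r/2) ⊆ cthickening r K := hball x hx
    have hxΩ : x ∈ Ω := hKrΩ (self_subset_cthickening K hx)
    have hRM : 4*M*ε ≤ (r/4)^2 := hεM ε hε hε'
    have hsub : closedBall x (r/4) ⊆ Ω :=
      fun w hw => hKrΩ (hxK2 (closedBall_subset_closedBall (by linarith) hw))
    obtain ⟨y, hyB, hymax, hval, hysq⟩ :=
      supConv_exists_max hu hM hε (by positivity : (0:ℝ) < r/4) hRM hxΩ hsub
    have hyKr : y ∈ cthickening r K := hxK2 (closedBall_subset_closedBall (by linarith) hyB)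
    have hyV : y ∈ V := hrV hyKr
    have hyΩ : y ∈ Ω := hVΩ hyV
    have hygrad : HasGradientAt u (ε⁻¹ • (y - x)) y :=
      supConv_foc hε hΩopen hVopen huC1 hyV hyΩ hymax
    refine ⟨y, hysq, hyKr, ?_⟩
    rw [hygrad.gradient]
    -- the central quadratic estimate
    have hest : ∀ x' ∈ closedBall x (r/8),
        |supConv ε Ω u x' - supConv ε Ω u x - ⟪ε⁻¹ • (y - x), x' - x⟫|
          ≤ 5/(2*ε) * ‖x' - x‖^2 := by
      intro x' hx'
      have hx'x : dist x' x ≤ r/8 := mem_closedBall.1 hx'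
      have hx'Ω : x' ∈ Ω := hKrΩ (hxK2 (closedBall_subset_closedBall (by linarith) hx'))
      have hsub' : closedBall x' (r/4) ⊆ Ω := by
        intro w hw
        refine hKrΩ (hxK2 (mem_closedBall.2 ?_))
        have h1 := mem_closedBall.1 hw
        calc dist w x ≤ dist w x' + dist x' x := dist_triangle w x' x
        _ ≤ r/2 := by linarith
      obtain ⟨y', hy'B, hy'max, hval', hy'sq⟩ :=
        supConv_exists_max hu hM hε (by positivity : (0:ℝ) < r/4) hRM hx'Ω hsub'
      have hy'x : dist y' x ≤ 3*r/8 := by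
        have h1 := mem_closedBall.1 hy'B
        calc dist y' x ≤ dist y' x' + dist x' x := dist_triangle _ _ _
        _ ≤ 3*r/8 := by linarith
      have hy'Kr : y' ∈ cthickening r K := hxK2 (mem_closedBall.2 (by linarith))
      have hy'V : y' ∈ V := hrV hy'Kr
      have hy'Ω : y' ∈ Ω := hVΩ hy'V
      have hy'grad : HasGradientAt u (ε⁻¹ • (y' - x')) y' :=
        supConv_foc hε hΩopen hVopen huC1 hy'V hy'Ω hy'max
      -- Lipschitz estimate for the maximizers
      have hseg : segment ℝ y y' ⊆ cthickening r K := by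
        have hyin : y ∈ closedBall x (r/2) := closedBall_subset_closedBall (by linarith) hyB
        have hy'in : y' ∈ closedBall x (r/2) := mem_closedBall.2 (by linarith)
        exact ((convex_closedBall x (r/2)).segment_subset hyin hy'in).trans hxK2
      have hdy : DifferentiableAt ℝ u y :=
        (huC1.differentiableOn one_ne_zero).differentiableAt (hVopen.mem_nhds hyV)
      have hdy' : DifferentiableAt ℝ u y' :=
        (huC1.differentiableOn one_ne_zero).differentiableAt (hVopen.mem_nhds hy'V)
      have hp1 := support_paraboloid hC0 (hCsc y y' hseg) hdy
      have hp2 := support_paraboloid hC0 (hCsc y' y (by rw [segment_symm]; exact hseg)) hdy'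
      rw [hygrad.gradient] at hp1
      rw [hy'grad.gradient] at hp2
      have hnormsym : ‖y' - y‖ = ‖y - y'‖ := norm_sub_rev _ _
      have hinner1 : ⟪ε⁻¹ • (y - x), y' - y⟫ = ε⁻¹ * ⟪y - x, y' - y⟫ :=
        real_inner_smul_left _ _ _
      have hinner2 : ⟪ε⁻¹ • (y' - x'), y - y'⟫ = ε⁻¹ * ⟪y' - x', y - y'⟫ :=
        real_inner_smul_left _ _ _
      have hcomb : ⟪y - x, y' - y⟫ + ⟪y' - x', y - y'⟫
          = ⟪x' - x, y' - y⟫ - ‖y' - y‖^2 := by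
        have h1 : ⟪y' - x', y - y'⟫ = -⟪y' - x', y' - y⟫ := by
          rw [← inner_neg_right]; congr 1; abel
        rw [h1, ← sub_eq_add_neg, ← inner_sub_left]
        have h2 : (y - x) - (y' - x') = (x' - x) - (y' - y) := by abel
        rw [h2, inner_sub_left, real_inner_self_eq_norm_sq]
      have hmul : 0 ≤ ε⁻¹ * (⟪x' - x, y' - y⟫ - ‖y' - y‖^2) + C * ‖y - y'‖^2 := by
        have hadd : 0 ≤ ⟪ε⁻¹ • (y - x), y' - y⟫ + ⟪ε⁻¹ • (y' - x'), y - y'⟫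
            + C * ‖y - y'‖^2 := by
          have hss : ‖y' - y‖^2 = ‖y - y'‖^2 := by rw [hnormsym]
          nlinarith [hp1, hp2, hss]
        rw [hinner1, hinner2] at hadd
        calc (0:ℝ) ≤ ε⁻¹ * ⟪y - x, y' - y⟫ + ε⁻¹ * ⟪y' - x', y - y'⟫ + C * ‖y - y'‖^2 :=
          hadd
        _ = ε⁻¹ * (⟪y - x, y' - y⟫ + ⟪y' - x', y - y'⟫) + C * ‖y - y'‖^2 := by ring
        _ = ε⁻¹ * (⟪x' - x, y' - y⟫ - ‖y' - y‖^2) + C * ‖y - y'‖^2 := by rw [hcomb]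
      have hCS : ⟪x' - x, y' - y⟫ ≤ ‖x' - x‖ * ‖y' - y‖ := real_inner_le_norm _ _
      have hkey0 : (1/2) * ‖y' - y‖^2 ≤ ⟪x' - x, y' - y⟫ := by
        have h3 : 0 ≤ ε * (ε⁻¹ * (⟪x' - x, y' - y⟫ - ‖y' - y‖^2) + C * ‖y - y'‖^2) :=
          mul_nonneg hε.le hmul
        rw [mul_add, ← mul_assoc, mul_inv_cancel₀ (ne_of_gt hε), one_mul] at h3
        have hss : ‖y - y'‖^2 = ‖y' - y‖^2 := by rw [← hnormsym]
        rw [hss] at h3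
        nlinarith [mul_le_mul_of_nonneg_right hεC' (sq_nonneg ‖y' - y‖)]
      have hlip : ‖y' - y‖ ≤ 2 * ‖x' - x‖ := by
        nlinarith [hkey0.trans hCS, norm_nonneg (y' - y), norm_nonneg (x' - x),
          sq_nonneg (‖y' - y‖ - 2*‖x' - x‖)]
      -- upper and lower quadratic bounds
      have hub : supConv ε Ω u x' - supConv ε Ω u x
          ≤ (‖x - y'‖^2 - ‖x' - y'‖^2)/(2*ε) := by
        have h1 : u y' - ‖x - y'‖^2/(2*ε) ≤ supConv ε Ω u x := by
          rw [hval]; exact hymax y' hy'Ω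
        rw [hval', sub_div]
        linarith
      have hlb : (‖x - y‖^2 - ‖x' - y‖^2)/(2*ε)
          ≤ supConv ε Ω u x' - supConv ε Ω u x := by
        have h1 : u y - ‖x' - y‖^2/(2*ε) ≤ supConv ε Ω u x' := by
          rw [hval']; exact hy'max y hyΩ
        rw [hval, sub_div]
        linarith
      have hpips : ⟪ε⁻¹ • (y - x), x' - x⟫ = (2*⟪y - x, x' - x⟫)/(2*ε) := by
        rw [real_inner_smul_left]
        field_simp
      have hnum1 : ∀ w : EuclideanSpace ℝ (Fin n),
          ⟪x - x', (x - w) + (x' - w)⟫ - 2*⟪y - x, x' - x⟫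
          = ⟪x - x', ((x - w) + (x' - w)) + (2:ℝ)•(y - x)⟫ := by
        intro w
        have e1 : 2*⟪y - x, x' - x⟫ = ⟪x' - x, (2:ℝ)•(y - x)⟫ := by
          rw [real_inner_smul_right, real_inner_comm]
        have e2 : ⟪x' - x, (2:ℝ)•(y - x)⟫ = -⟪x - x', (2:ℝ)•(y - x)⟫ := by
          rw [← inner_neg_left]; congr 1; abel
        rw [e1, e2, sub_neg_eq_add, ← inner_add_right]
      have hub2 : supConv ε Ω u x' - supConv ε Ω u x - ⟪ε⁻¹ • (y - x), x' - x⟫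
          ≤ 5/(2*ε) * ‖x' - x‖^2 := by
        have h0 : supConv ε Ω u x' - supConv ε Ω u x - ⟪ε⁻¹ • (y - x), x' - x⟫
            ≤ (‖x - y'‖^2 - ‖x' - y'‖^2 - 2*⟪y - x, x' - x⟫)/(2*ε) := by
          rw [hpips]
          have := hub
          have hd2 : (‖x - y'‖^2 - ‖x' - y'‖^2 - 2*⟪y - x, x' - x⟫)/(2*ε)
              = (‖x - y'‖^2 - ‖x' - y'‖^2)/(2*ε) - (2*⟪y - x, x' - x⟫)/(2*ε) := by
            rw [sub_div]
          linarith [hd2.ge, hd2.le]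
        have h1 : ‖x - y'‖^2 - ‖x' - y'‖^2 - 2*⟪y - x, x' - x⟫
            = ⟪x - x', ((x - y') + (x' - y')) + (2:ℝ)•(y - x)⟫ := by
          rw [norm_sq_sub_norm_sq]
          have hargs : (x - y') - (x' - y') = x - x' := by abel
          have hargs2 : (x - y') + (x' - y') = (x - y') + (x' - y') := rfl
          rw [hargs]
          exact hnum1 y'
        have h2 : ⟪x - x', ((x - y') + (x' - y')) + (2:ℝ)•(y - x)⟫
            ≤ 5 * ‖x' - x‖^2 := by
          have hveq : ((x - y') + (x' - y')) + (2:ℝ)•(y - x)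
              = (x' - x) + (2:ℝ)•(y - y') := by module
          rw [hveq]
          have hCS2 := real_inner_le_norm (x - x') ((x' - x) + (2:ℝ)•(y - y'))
          have hnb : ‖(x' - x) + (2:ℝ)•(y - y')‖
              ≤ ‖x' - x‖ + 2*‖y - y'‖ := by
            refine (norm_add_le _ _).trans ?_
            have hs1 : ‖(2:ℝ)•(y - y')‖ = 2*‖y - y'‖ := by
              rw [norm_smul]; simp
            rw [hs1]
          have hxx : ‖x - x'‖ = ‖x' - x‖ := norm_sub_rev _ _
          have hyy : ‖y - y'‖ = ‖y' - y‖ := norm_sub_rev _ _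
          nlinarith [norm_nonneg (x - x'), norm_nonneg (x' - x), hlip,
            mul_le_mul_of_nonneg_left hnb (norm_nonneg (x - x'))]
        calc supConv ε Ω u x' - supConv ε Ω u x - ⟪ε⁻¹ • (y - x), x' - x⟫
            ≤ (‖x - y'‖^2 - ‖x' - y'‖^2 - 2*⟪y - x, x' - x⟫)/(2*ε) := h0
        _ = ⟪x - x', ((x - y') + (x' - y')) + (2:ℝ)•(y - x)⟫/(2*ε) := by rw [h1]
        _ ≤ (5 * ‖x' - x‖^2)/(2*ε) := (div_le_div_iff_of_pos_right h2ε).2 h2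
        _ = 5/(2*ε) * ‖x' - x‖^2 := by ring
      have hlb2 : -(5/(2*ε) * ‖x' - x‖^2)
          ≤ supConv ε Ω u x' - supConv ε Ω u x - ⟪ε⁻¹ • (y - x), x' - x⟫ := by
        have h0 : (‖x - y‖^2 - ‖x' - y‖^2 - 2*⟪y - x, x' - x⟫)/(2*ε)
            ≤ supConv ε Ω u x' - supConv ε Ω u x - ⟪ε⁻¹ • (y - x), x' - x⟫ := by
          rw [hpips]
          have hd2 : (‖x - y‖^2 - ‖x' - y‖^2 - 2*⟪y - x, x' - x⟫)/(2*ε)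
              = (‖x - y‖^2 - ‖x' - y‖^2)/(2*ε) - (2*⟪y - x, x' - x⟫)/(2*ε) := by
            rw [sub_div]
          linarith [hd2.ge, hd2.le]
        have h1 : ‖x - y‖^2 - ‖x' - y‖^2 - 2*⟪y - x, x' - x⟫
            = ⟪x - x', ((x - y) + (x' - y)) + (2:ℝ)•(y - x)⟫ := by
          rw [norm_sq_sub_norm_sq]
          have hargs : (x - y) - (x' - y) = x - x' := by abel
          rw [hargs]
          exact hnum1 y
        have hveq : ((x - y) + (x' - y)) + (2:ℝ)•(y - x) = x' - x := by module
        rw [hveq] at h1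
        have h2 : -‖x' - x‖^2 ≤ ⟪x - x', x' - x⟫ := by
          have : x - x' = -(x' - x) := by abel
          rw [this, inner_neg_left, real_inner_self_eq_norm_sq]
        have h3 : -(5/(2*ε) * ‖x' - x‖^2) ≤ (-‖x' - x‖^2)/(2*ε) := by
          rw [neg_div]
          have : ‖x' - x‖^2/(2*ε) ≤ 5/(2*ε) * ‖x' - x‖^2 := by
            rw [div_mul_eq_mul_div]
            gcongr
            nlinarith [sq_nonneg ‖x' - x‖]
          linarith
        have h4 : (-‖x' - x‖^2)/(2*ε) ≤ (‖x - y‖^2 - ‖x' - y‖^2 - 2*⟪y - x, x' - x⟫)/(2*ε) := by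
          gcongr
          linarith [h1.le, h2]
        linarith
      rw [abs_le]
      exact ⟨hlb2, hub2⟩
    -- conclude differentiability
    rw [hasGradientAt_iff_hasFDerivAt, hasFDerivAt_iff_isLittleO_nhds_zero,
      Asymptotics.isLittleO_iff]
    intro c hc
    have hrc : 0 < min (r/8) (c*(2*ε)/5) := lt_min (by positivity) (by positivity)
    have hmem : closedBall (0 : EuclideanSpace ℝ (Fin n)) (min (r/8) (c*(2*ε)/5)) ∈
        nhds (0 : EuclideanSpace ℝ (Fin n)) := closedBall_mem_nhds 0 hrc
    filter_upwards [hmem] with h hh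
    have hh1 : ‖h‖ ≤ r/8 := by
      have := mem_closedBall.1 hh
      rw [dist_zero_right] at this
      exact this.trans (min_le_left _ _)
    have hh2 : ‖h‖ ≤ c*(2*ε)/5 := by
      have := mem_closedBall.1 hh
      rw [dist_zero_right] at this
      exact this.trans (min_le_right _ _)
    have hx'mem : x + h ∈ closedBall x (r/8) := by
      rw [mem_closedBall, dist_eq_norm]
      simpa using hh1
    have hE := hest (x + h) hx'mem
    have hsimp : (x + h) - x = h := by abel
    rw [hsimp] at hE
    have htd : (InnerProductSpace.toDual ℝ (EuclideanSpace ℝ (Fin n)))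
        (ε⁻¹ • (y - x)) h = ⟪ε⁻¹ • (y - x), h⟫ := InnerProductSpace.toDual_apply_apply
    rw [Real.norm_eq_abs, htd]
    calc |supConv ε Ω u (x + h) - supConv ε Ω u x - ⟪ε⁻¹ • (y - x), h⟫|
        ≤ 5/(2*ε) * ‖h‖^2 := hE
    _ ≤ c * ‖h‖ := by
      rw [div_mul_eq_mul_div, div_le_iff₀ h2ε]
      nlinarith [norm_nonneg h, mul_le_mul_of_nonneg_left hh2 (by positivity : (0:ℝ) ≤ 5*‖h‖)]

  constructor
  · refine ⟨ε₀, hε₀pos, fun ε hε hε' x hx => ?_⟩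
    obtain ⟨y, _, _, hy⟩ := key ε hε hε' x hx
    exact hy.differentiableAt
  · intro δ hδ
    have hgc : ContinuousOn (fun w => gradient u w) V := by
      have h1 : ContinuousOn (fderiv ℝ u) V := huC1.continuousOn_fderiv_of_isOpen hVopen le_rfl
      exact ((InnerProductSpace.toDual ℝ
        (EuclideanSpace ℝ (Fin n))).symm.continuous.comp_continuousOn h1)
    have hUC : UniformContinuousOn (fun w => gradient u w) (cthickening r K) :=
      hKrc.uniformContinuousOn_of_continuous (hgc.mono hrV)
    rw [Metric.uniformContinuousOn_iff] at hUC
    obtain ⟨η, hη, hUC'⟩ := hUC δ hδ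
    refine ⟨min ε₀ (η^2/(4*M+1)), lt_min hε₀pos (by positivity), fun ε hε hε' x hx => ?_⟩
    obtain ⟨y, hy1, hy2, hy3⟩ := key ε hε (lt_of_lt_of_le hε' (min_le_left _ _)) x hx
    rw [hy3.gradient]
    have hxKr : x ∈ cthickening r K := self_subset_cthickening K hx
    have hdist : dist y x < η := by
      rw [dist_eq_norm]
      have h2 : ε < η^2/(4*M+1) := lt_of_lt_of_le hε' (min_le_right _ _)
      rw [lt_div_iff₀ (by positivity)] at h2
      nlinarith [norm_nonneg (y - x), hη, sq_nonneg (‖y - x‖ + η)]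
    have := hUC' y hy2 x hxKr hdist
    rwa [dist_eq_norm] at this
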